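/- There is an absolute constant C such that for every integer c ≥ 0 the sequence i ↦ t(i+c) is generated by a Fibonacci-DFAO with at most C·(c+1) states, where t is the Fibonacci–Thue–Morse sequence: t(i) is the number of 1s in the valid Fibonacci (Zeckendorf) representation of i, taken modulo 2. -/

import Mathlib

/-- The Fibonacci (Zeckendorf) value of a binary word written msd-first:
`[x₁⋯x_ℓ] = Σ_j x_j · F_{ℓ−j+2}`. -/
def fibVal : List Bool → ℕ
  | [] => 0
  | a :: rest => (if a then Nat.fib (rest.length + 2) else 0) + fibVal rest

/-- A binary word is a valid Fibonacci representation if it has no factor `11`. -/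
def ValidFib (w : List Bool) : Prop :=
  w.Chain' (fun a b => a = false ∨ b = false)

/-- A deterministic finite automaton with output (DFAO). -/
structure DFAO (α : Type*) (σ : Type*) (Δ : Type*) where
  step : σ → α → σ
  start : σ
  out : σ → Δ

/-- The output of a DFAO on an input word. -/
def DFAO.eval {α σ Δ : Type*} (M : DFAO α σ Δ) (w : List α) : Δ :=
  M.out (w.foldl M.step M.start)

/-- `h : ℕ → Δ` is generated by a Fibonacci-DFAO with at most `m` states:
there is a DFAO with input alphabet `{0,1}` and at most `m` states whose output on
every valid Fibonacci representation `w` (leading zeros allowed) is `h [w]`. -/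
def FibGeneratedBy {Δ : Type*} (h : ℕ → Δ) (m : ℕ) : Prop :=
  ∃ (σ : Type) (_ : Fintype σ) (M : DFAO Bool σ Δ),
    Fintype.card σ ≤ m ∧ ∀ w : List Bool, ValidFib w → M.eval w = h (fibVal w)

/-- The Fibonacci–Thue–Morse sequence: the number of 1s in the Zeckendorf
representation of `i`, taken modulo 2.  (`Nat.zeckendorf i` lists the indices of
the Fibonacci numbers appearing in the Zeckendorf representation of `i`.) -/
def fibThueMorse (i : ℕ) : ℕ := (Nat.zeckendorf i).length % 2

namespace FTMAux

/-- Value of a word with all Fibonacci weights shifted up by `k`. -/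
def fibValK (k : ℕ) : List Bool → ℕ
  | [] => 0
  | a :: rest => (if a then Nat.fib (rest.length + k + 2) else 0) + fibValK k rest

/-- Number of ones in a word. -/
def ones : List Bool → ℕ
  | [] => 0
  | a :: rest => (if a then 1 else 0) + ones rest

/-- The 4-state "class" automaton tracking the carry-relevant suffix structure. -/
inductive Cl : Type
  | A | B | C | D
deriving DecidableEq

instance : Fintype Cl := ⟨{Cl.A, Cl.B, Cl.C, Cl.D}, fun x => by cases x <;> simp⟩

open Cl

/-- Transition of the class automaton. -/
def dl : Cl → Bool → Cl
  | A, false => A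
  | A, true  => B
  | B, false => C
  | B, true  => B
  | C, false => A
  | C, true  => D
  | D, false => A
  | D, true  => D

/-- Canonical representative of each class. -/
def rep : Cl → List Bool
  | A => []
  | B => [true]
  | C => [true, false]
  | D => [true, false, true]

/-- Class of a word. -/
def cls (H : List Bool) : Cl := H.foldl dl A

/-- Parity-valued Zeckendorf length. -/
def lk (n : ℕ) : ZMod 2 := ((Nat.zeckendorf n).length : ZMod 2)

lemma fibVal_eq (w : List Bool) : fibVal w = fibValK 0 w := by
  induction w with
  | nil => rfl
  | cons a rest ih => simp [fibVal, fibValK, ih]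

lemma fibValK_append (H : List Bool) (k : ℕ) (W : List Bool) :
    fibValK k (H ++ W) = fibValK (W.length + k) H + fibValK k W := by
  induction H with
  | nil => simp [fibValK]
  | cons a H ih =>
      have h : (H ++ W).length + k + 2 = H.length + (W.length + k) + 2 := by
        rw [List.length_append]; omega
      simp only [List.cons_append, fibValK, ih, List.append_eq]
      rw [h]
      ring

lemma fibValK_concat (k : ℕ) (H : List Bool) (b : Bool) :
    fibValK k (H ++ [b]) = fibValK (k + 1) H + (if b then Nat.fib (k + 2) else 0) := by
  rw [fibValK_append]
  simp [fibValK]; ring_nf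

lemma validFib_append {l₁ l₂ : List Bool} (h : ValidFib (l₁ ++ l₂)) :
    ValidFib l₁ ∧ ValidFib l₂ := by
  rw [ValidFib, List.Chain', List.isChain_append] at h
  exact ⟨h.1, h.2.1⟩

lemma validFib_nil : ValidFib [] := List.isChain_nil

lemma validFib_replicate_append (n : ℕ) {x : List Bool} (h : ValidFib x) :
    ValidFib (List.replicate n false ++ x) := by
  induction n with
  | zero => simpa
  | succ n ih =>
      have : List.replicate (n+1) false ++ x = false :: (List.replicate n false ++ x) := by
        simp [List.replicate_succ]
      rw [this, ValidFib, List.Chain', List.isChain_cons]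
      exact ⟨fun y _ => Or.inl rfl, ih⟩

lemma fibValK_lt : ∀ (w : List Bool) (k : ℕ), ValidFib w →
    fibValK k w < Nat.fib (w.length + k + 2)
  | [], k, _ => by
      simp only [fibValK, List.length_nil]
      exact Nat.fib_pos.2 (by omega)
  | false :: r, k, h => by
      have ih := fibValK_lt r k h.tail
      have h1 : fibValK k (false :: r) = fibValK k r := by simp [fibValK]
      rw [h1]
      refine lt_of_lt_of_le ih (Nat.fib_mono ?_)
      simp only [List.length_cons]; omega
  | [true], k, _ => by
      have h1 : fibValK k [true] = Nat.fib (0 + k + 2) := by simp [fibValK]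
      rw [h1]
      have h2 : ([true] : List Bool).length + k + 2 = 0 + k + 2 + 1 := by
        simp only [List.length_cons, List.length_nil]; omega
      rw [h2]
      exact Nat.fib_lt_fib_succ (by omega)
  | true :: false :: r, k, h => by
      have ih := fibValK_lt r k h.tail.tail
      have h1 : fibValK k (true :: false :: r) =
          Nat.fib (r.length + 1 + k + 2) + fibValK k r := by
        simp [fibValK]
      rw [h1, show r.length + 1 + k + 2 = r.length + k + 3 from by omega]
      have h2 : (true :: false :: r).length + k + 2 = r.length + k + 4 := by
        simp only [List.length_cons]; omega
      rw [h2]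
      have hsum : Nat.fib (r.length + k + 4) =
          Nat.fib (r.length + k + 2) + Nat.fib (r.length + k + 3) :=
        Nat.fib_add_two (n := r.length + k + 2)
      omega
  | true :: true :: r, k, h => by
      exfalso
      have := List.isChain_cons_cons.mp h
      rcases this.1 with h' | h' <;> simp at h'

lemma fibValK_inj : ∀ (w₁ w₂ : List Bool) (k : ℕ), w₁.length = w₂.length →
    ValidFib w₁ → ValidFib w₂ → fibValK k w₁ = fibValK k w₂ → w₁ = w₂
  | [], [], _, _, _, _, _ => rfl
  | [], b :: r, k, hl, _, _, _ => by simp at hl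
  | a :: r, [], k, hl, _, _, _ => by simp at hl
  | a₁ :: r₁, a₂ :: r₂, k, hl, h₁, h₂, he => by
      simp only [List.length_cons, Nat.add_right_cancel_iff] at hl
      have hlow : ∀ (r : List Bool), ValidFib (false :: r) →
          fibValK k (false :: r) < Nat.fib (r.length + k + 2) := by
        intro r hr
        have := fibValK_lt r k hr.tail
        simpa [fibValK] using this
      have hhigh : ∀ (r : List Bool),
          Nat.fib (r.length + k + 2) ≤ fibValK k (true :: r) := by
        intro r; simp [fibValK]
      have ha : a₁ = a₂ := by
        cases a₁ <;> cases a₂ <;> try rfl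
        · exfalso
          have b1 := hlow r₁ h₁
          have b2 := hhigh r₂
          rw [hl] at b1
          omega
        · exfalso
          have b1 := hlow r₂ h₂
          have b2 := hhigh r₁
          rw [hl] at b2
          omega
      subst ha
      have he' : fibValK k r₁ = fibValK k r₂ := by
        cases a₁ <;> simp [fibValK, hl] at he <;> omega
      rw [fibValK_inj r₁ r₂ k hl h₁.tail h₂.tail he']

/-- Key Zeckendorf lemma: prepending a sufficiently large Fibonacci index. -/
lemma zeck_cons (k v : ℕ) (hv : v < Nat.fib (k + 1)) :
    Nat.zeckendorf (Nat.fib (k + 2) + v) = (k + 2) :: Nat.zeckendorf v := by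
  have hrep : List.IsZeckendorfRep ((k + 2) :: Nat.zeckendorf v) := by
    rw [List.IsZeckendorfRep, List.cons_append, List.isChain_cons]
    refine ⟨?_, Nat.isZeckendorfRep_zeckendorf v⟩
    intro y hy
    rcases Nat.eq_zero_or_pos v with rfl | hvpos
    · simp only [Nat.zeckendorf_zero, List.nil_append, List.head?_cons,
        Option.mem_def, Option.some.injEq] at hy
      omega
    · rw [Nat.zeckendorf_of_pos hvpos, List.cons_append, List.head?_cons,
        Option.mem_def, Option.some.injEq] at hy
      subst hy
      have : Nat.greatestFib v < k + 1 := Nat.greatestFib_lt.2 hv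
      omega
  have hsum : ((((k + 2) :: Nat.zeckendorf v)).map Nat.fib).sum = Nat.fib (k + 2) + v := by
    rw [List.map_cons, List.sum_cons, Nat.sum_zeckendorf_fib]
  calc Nat.zeckendorf (Nat.fib (k + 2) + v)
      = Nat.zeckendorf ((((k + 2) :: Nat.zeckendorf v)).map Nat.fib).sum := by rw [hsum]
    _ = (k + 2) :: Nat.zeckendorf v := Nat.zeckendorf_sum_fib hrep

lemma lk_fib_add (k v : ℕ) (hv : v < Nat.fib (k + 1)) :
    lk (Nat.fib (k + 2) + v) = 1 + lk v := by
  rw [lk, zeck_cons k v hv, List.length_cons, lk]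
  push_cast
  ring

lemma lk_L2 (k v : ℕ) (hv : v < Nat.fib (k + 3)) :
    lk (Nat.fib (k + 5) + (Nat.fib (k + 3) + v)) = lk v := by
  rcases Nat.lt_or_ge v (Nat.fib (k + 2)) with hlt | hge
  · have e1 : lk (Nat.fib (k + 5) + (Nat.fib (k + 3) + v)) = 1 + lk (Nat.fib (k + 3) + v) := by
      refine lk_fib_add (k + 3) (Nat.fib (k + 3) + v) ?_
      show Nat.fib (k + 3) + v < Nat.fib (k + 4)
      have : Nat.fib (k + 4) = Nat.fib (k + 2) + Nat.fib (k + 3) := Nat.fib_add_two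
      omega
    have e2 : lk (Nat.fib (k + 3) + v) = 1 + lk v := lk_fib_add (k + 1) v hlt
    rw [e1, e2, ← add_assoc, show (1 : ZMod 2) + 1 = 0 from rfl, zero_add]
  · obtain ⟨u, rfl⟩ : ∃ u, v = Nat.fib (k + 2) + u := ⟨v - Nat.fib (k + 2), by omega⟩
    have hu : u < Nat.fib (k + 1) := by
      have : Nat.fib (k + 3) = Nat.fib (k + 1) + Nat.fib (k + 2) := Nat.fib_add_two
      omega
    have harg : Nat.fib (k + 5) + (Nat.fib (k + 3) + (Nat.fib (k + 2) + u))
        = Nat.fib (k + 6) + u := by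
      have e3 : Nat.fib (k + 4) = Nat.fib (k + 2) + Nat.fib (k + 3) := Nat.fib_add_two
      have e4 : Nat.fib (k + 6) = Nat.fib (k + 4) + Nat.fib (k + 5) := Nat.fib_add_two
      omega
    rw [harg]
    have e5 : lk (Nat.fib (k + 6) + u) = 1 + lk u := by
      refine lk_fib_add (k + 4) u ?_
      exact lt_of_lt_of_le hu (Nat.fib_mono (by omega))
    have e6 : lk (Nat.fib (k + 2) + u) = 1 + lk u := lk_fib_add k u hu
    rw [e5, e6]

lemma cls_concat (H : List Bool) (b : Bool) : cls (H ++ [b]) = dl (cls H) b := by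
  simp [cls, List.foldl_append]

lemma ones_concat (H : List Bool) (b : Bool) :
    ones (H ++ [b]) = ones H + (if b then 1 else 0) := by
  induction H with
  | nil => simp [ones]
  | cons a r ih => simp [ones, ih]; ring

lemma cls_BD : ∀ H : List Bool, (cls H = B ∨ cls H = D) → H.getLast? = some true := by
  intro H
  induction H using List.reverseRecOn with
  | nil => intro h; rcases h with h | h <;> simp [cls] at h
  | append_singleton H b _ =>
      intro h
      rw [cls_concat] at h
      rw [List.getLast?_concat]
      rcases h with h | h <;>
        (cases hq : cls H <;> cases b <;> rw [hq] at h <;> simp [dl] at h ⊢)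

/-- The main lemma: the Zeckendorf-length parity of `fibValK k H + v` differs from that
of the canonical representative of the class of `H` exactly by the parity of ones of `H`. -/
lemma main_lemma : ∀ (H : List Bool), ValidFib H → ∀ (k v : ℕ), v < Nat.fib (k + 3) →
    lk (fibValK k H + v) + (ones H : ZMod 2)
      = lk (fibValK k (rep (cls H)) + v) + (ones (rep (cls H)) : ZMod 2) := by
  intro H
  induction H using List.reverseRecOn with
  | nil => intro _ k v _; rfl
  | append_singleton H b IH =>
      intro hvalid k v hv
      have hH : ValidFib H := (validFib_append hvalid).1
      have h2 : (2 : ZMod 2) = 0 := rfl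
      have hfib4 : Nat.fib (k + 1 + 3) = Nat.fib (k + 2) + Nat.fib (k + 3) := by
        rw [show k + 1 + 3 = k + 2 + 2 from by omega]; exact Nat.fib_add_two
    
      have hIH0 := IH hH (k + 1) ((if b then Nat.fib (k + 2) else 0) + v)
        (by cases b <;> simp <;> omega)
      rw [cls_concat, fibValK_concat, ones_concat]
      cases b with
      | false =>
          simp only [Bool.false_eq_true, if_false, add_zero, Nat.cast_add, Nat.cast_zero,
            zero_add] at hIH0 ⊢
          cases hq : cls H <;> rw [hq] at hIH0 <;> simp only [dl]
          case A =>
            simp only [rep, fibValK, ones, List.length_nil, List.length_cons,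
              Bool.false_eq_true, if_false, if_true, Nat.cast_zero, Nat.cast_add,
              Nat.cast_one, zero_add, add_zero] at hIH0 ⊢
            exact hIH0
          case B =>
            simp only [rep, fibValK, ones, List.length_nil, List.length_cons,
              Bool.false_eq_true, if_false, if_true, Nat.cast_zero, Nat.cast_add,
              Nat.cast_one, zero_add, add_zero] at hIH0 ⊢
            rw [show k + 1 + 2 = k + 3 from by omega] at hIH0
            rw [show 1 + k + 2 = k + 3 from by omega]
            exact hIH0
          case C =>
            simp only [rep, fibValK, ones, List.length_nil, List.length_cons,
              Bool.false_eq_true, if_false, if_true, Nat.cast_zero, Nat.cast_add,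
              Nat.cast_one, zero_add, add_zero] at hIH0 ⊢
            rw [show 1 + (k + 1) + 2 = k + 4 from by omega] at hIH0
            have e1 : lk (Nat.fib (k + 4) + v) = 1 + lk v :=
              lk_fib_add (k + 2) v hv
            linear_combination hIH0 + e1 + h2
          case D =>
            simp only [rep, fibValK, ones, List.length_nil, List.length_cons,
              Bool.false_eq_true, if_false, if_true, Nat.cast_zero, Nat.cast_add,
              Nat.cast_one, zero_add, add_zero] at hIH0 ⊢
            rw [show 1 + 1 + (k + 1) + 2 = k + 5 from by omega,
               show k + 1 + 2 = k + 3 from by omega] at hIH0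
            rw [show Nat.fib (k + 5) + Nat.fib (k + 3) + v
                = Nat.fib (k + 5) + (Nat.fib (k + 3) + v) from by omega] at hIH0
            have e2 : lk (Nat.fib (k + 5) + (Nat.fib (k + 3) + v)) = lk v := lk_L2 k v hv
            linear_combination hIH0 + e2 + h2
      | true =>
          have hAC : cls H = Cl.A ∨ cls H = Cl.C := by
            have hjun := (List.isChain_append.mp hvalid).2.2
            cases hq : cls H
            · exact Or.inl rfl
            · exfalso
              have hl := cls_BD H (Or.inl hq)
              have := hjun true (by rw [hl]; rfl) true rfl
              simp at this
            · exact Or.inr rfl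
            · exfalso
              have hl := cls_BD H (Or.inr hq)
              have := hjun true (by rw [hl]; rfl) true rfl
              simp at this
          simp only [if_true, Nat.cast_add, Nat.cast_one] at hIH0 ⊢
          rcases hAC with hq | hq <;> rw [hq] at hIH0 ⊢ <;> simp only [dl]
          · -- A → B
            simp only [rep, fibValK, ones, List.length_nil, List.length_cons,
              Bool.false_eq_true, if_false, if_true, Nat.cast_zero, Nat.cast_add,
              Nat.cast_one, zero_add, add_zero] at hIH0 ⊢
            rw [show fibValK (k + 1) H + Nat.fib (k + 2) + v
                = fibValK (k + 1) H + (Nat.fib (k + 2) + v) from by omega]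
            linear_combination hIH0
          · -- C → D
            simp only [rep, fibValK, ones, List.length_nil, List.length_cons,
              Bool.false_eq_true, if_false, if_true, Nat.cast_zero, Nat.cast_add,
              Nat.cast_one, zero_add, add_zero] at hIH0 ⊢
            rw [show 1 + (k + 1) + 2 = k + 4 from by omega] at hIH0
            rw [show 1 + 1 + k + 2 = k + 4 from by omega]
            rw [show fibValK (k + 1) H + Nat.fib (k + 2) + v
                = fibValK (k + 1) H + (Nat.fib (k + 2) + v) from by omega]
            rw [show Nat.fib (k + 4) + Nat.fib (k + 2) + v
                = Nat.fib (k + 4) + (Nat.fib (k + 2) + v) from by omega]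
            linear_combination hIH0

lemma fibValK_replicate (k n : ℕ) (x : List Bool) :
    fibValK k (List.replicate n false ++ x) = fibValK k x := by
  induction n with
  | zero => simp
  | succ n ih =>
      rw [List.replicate_succ, List.cons_append]
      simpa [fibValK] using ih

/-- The window: a valid word of fixed length `d0`. -/
def Win (d0 : ℕ) : Type := {w : List Bool // w.length = d0 ∧ ValidFib w}

instance decValidFib : DecidablePred ValidFib := fun w =>
  inferInstanceAs (Decidable (List.IsChain _ w))

def winEnc {d0 : ℕ} (W : Win d0) : Fin (Nat.fib (d0 + 2)) :=
  ⟨fibValK 0 W.1, by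
    have h := fibValK_lt W.1 0 W.2.2
    rw [W.2.1] at h
    simpa using h⟩

lemma winEnc_inj {d0 : ℕ} : Function.Injective (winEnc (d0 := d0)) := by
  intro W₁ W₂ h
  have hval : fibValK 0 W₁.1 = fibValK 0 W₂.1 := by
    have := congrArg Fin.val h
    simpa [winEnc] using this
  exact Subtype.ext (fibValK_inj W₁.1 W₂.1 0 (W₁.2.1.trans W₂.2.1.symm) W₁.2.2 W₂.2.2 hval)

noncomputable instance (d0 : ℕ) : Fintype (Win d0) := Fintype.ofInjective winEnc winEnc_inj

lemma card_Win (d0 : ℕ) : Fintype.card (Win d0) ≤ Nat.fib (d0 + 2) := by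
  simpa using Fintype.card_le_of_injective winEnc (winEnc_inj (d0 := d0))

/-- State space of the automaton. -/
def St (d0 : ℕ) : Type := Cl × ZMod 2 × Win d0

noncomputable instance (d0 : ℕ) : Fintype (St d0) :=
  inferInstanceAs (Fintype (Cl × ZMod 2 × Win d0))

lemma card_Cl : Fintype.card Cl = 4 := rfl

lemma card_St (d0 : ℕ) : Fintype.card (St d0) ≤ 8 * Nat.fib (d0 + 2) := by
  have h : Fintype.card (St d0) = 4 * (2 * Fintype.card (Win d0)) := by
    rw [show Fintype.card (St d0) = Fintype.card (Cl × ZMod 2 × Win d0) from rfl]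
    simp [St, Fintype.card_prod, card_Cl, ZMod.card]
  have := card_Win d0
  omega

def stepF (d0 : ℕ) (s : St d0) (b : Bool) : St d0 :=
  if h : s.2.2.1 = [] then (dl s.1 b, s.2.1 + (if b then 1 else 0), s.2.2)
  else
    if hv : ValidFib (s.2.2.1.tail ++ [b]) then
      (dl s.1 (s.2.2.1.head h), s.2.1 + (if s.2.2.1.head h then 1 else 0),
        ⟨s.2.2.1.tail ++ [b], by
          have hl := s.2.2.2.1
          have hpos : 0 < s.2.2.1.length := List.length_pos_iff.2 h
          simp only [List.length_append, List.length_tail, List.length_cons,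
            List.length_nil]
          omega, hv⟩)
    else (dl s.1 (s.2.2.1.head h), s.2.1 + (if s.2.2.1.head h then 1 else 0), s.2.2)

def startW (d0 : ℕ) : Win d0 :=
  ⟨List.replicate d0 false, by simp, by
    simpa using validFib_replicate_append d0 (x := []) validFib_nil⟩

def startF (d0 : ℕ) : St d0 := (Cl.A, 0, startW d0)

def outF (c d0 : ℕ) (s : St d0) : ℕ :=
  ((Nat.zeckendorf (fibValK d0 (rep s.1) + (fibValK 0 s.2.2.1 + c))).length
    + ones (rep s.1) + (s.2.1).val) % 2

lemma stepF_nil {d0 : ℕ} (q : Cl) (p : ZMod 2) (W : Win d0) (b : Bool) (hW : W.1 = []) :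
    stepF d0 (q, p, W) b = (dl q b, p + (if b then 1 else 0), W) := by
  unfold stepF
  exact dif_pos hW

lemma stepF_cons {d0 : ℕ} (q : Cl) (p : ZMod 2) (W : Win d0) (b w0 : Bool)
    (rest : List Bool) (hW : W.1 = w0 :: rest) (hv : ValidFib (rest ++ [b]))
    (hlen : (rest ++ [b]).length = d0) :
    stepF d0 (q, p, W) b
      = (dl q w0, p + (if w0 then 1 else 0), ⟨rest ++ [b], hlen, hv⟩) := by
  obtain ⟨l, hl, hvl⟩ := W
  simp only at hW
  subst hW
  unfold stepF
  exact (dif_neg (List.cons_ne_nil w0 rest)).trans (dif_pos hv)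

lemma eval_inv (d0 : ℕ) : ∀ (x : List Bool), ValidFib x →
    ∃ (H : List Bool) (W : Win d0),
      List.replicate d0 false ++ x = H ++ W.1 ∧
      x.foldl (stepF d0) (startF d0) = (cls H, (ones H : ZMod 2), W) := by
  intro x
  induction x using List.reverseRecOn with
  | nil =>
      intro _
      exact ⟨[], startW d0, by simp [startW], by simp [startF, cls, ones]; rfl⟩
  | append_singleton x b ih =>
      intro hvx
      have hx : ValidFib x := (validFib_append hvx).1
      obtain ⟨H, W, hpad, hfold⟩ := ih hx
      have hassoc : List.replicate d0 false ++ (x ++ [b])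
          = (List.replicate d0 false ++ x) ++ [b] := (List.append_assoc _ _ _).symm
      have hpad' : ValidFib ((H ++ W.1) ++ [b]) := by
        have := validFib_replicate_append d0 (x := x ++ [b]) hvx
        rwa [hassoc, hpad] at this
      have hfold' : (x ++ [b]).foldl (stepF d0) (startF d0)
          = stepF d0 (cls H, (ones H : ZMod 2), W) b := by
        rw [List.foldl_append, hfold]; rfl
      rcases hW : W.1 with _ | ⟨w0, rest⟩
      · refine ⟨H ++ [b], W, ?_, ?_⟩
        · rw [hassoc, hpad, hW]
          simp
        · rw [hfold', stepF_nil _ _ _ _ hW, cls_concat, ones_concat]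
          push_cast
          rfl
      · have hvrest : ValidFib (rest ++ [b]) := by
          have h1 : ValidFib ((H ++ [w0]) ++ (rest ++ [b])) := by
            rw [hW] at hpad'
            simpa [List.append_assoc] using hpad'
          exact (validFib_append h1).2
        have hlen : (rest ++ [b]).length = d0 := by
          have := W.2.1
          rw [hW] at this
          simp only [List.length_cons] at this
          simp only [List.length_append, List.length_cons, List.length_nil]
          omega
        refine ⟨H ++ [w0], ⟨rest ++ [b], hlen, hvrest⟩, ?_, ?_⟩
        · rw [hassoc, hpad, hW]
          simp [List.append_assoc]
        · rw [hfold', stepF_cons _ _ _ _ _ _ hW hvrest hlen, cls_concat, ones_concat]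
          push_cast
          rfl


end FTMAux

theorem fibThueMorse_shift_state_complexity :
    ∃ C : ℕ, ∀ c : ℕ,
      FibGeneratedBy (fun i => fibThueMorse (i + c)) (C * (c + 1)) := by
  classical
  refine ⟨24, fun c => ?_⟩
  set d0 := Nat.greatestFib c with hd0
  refine ⟨FTMAux.St d0, inferInstance,
    ⟨FTMAux.stepF d0, FTMAux.startF d0, FTMAux.outF c d0⟩, ?_, ?_⟩
  · -- cardinality bound
    have h1 := FTMAux.card_St d0
    have h3 : Nat.fib (d0 + 2) ≤ 3 * (c + 1) := by
      rcases Nat.eq_zero_or_pos c with rfl | hc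
      · have hz : Nat.greatestFib 0 = 0 := rfl
        rw [hd0, hz]
        decide
      · have hg2 : 2 ≤ d0 := by
          rw [hd0]
          exact Nat.le_greatestFib.2 (by simp; omega)
        obtain ⟨g, hg⟩ : ∃ g, d0 = g + 2 := ⟨d0 - 2, by omega⟩
        have e1 : Nat.fib (g + 4) = Nat.fib (g + 2) + Nat.fib (g + 3) :=
          Nat.fib_add_two
        have e2 : Nat.fib (g + 3) = Nat.fib (g + 1) + Nat.fib (g + 2) :=
          Nat.fib_add_two
        have e3 : Nat.fib (g + 1) ≤ Nat.fib (g + 2) := Nat.fib_mono (by omega)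
        have e4 : Nat.fib (g + 2) ≤ c := by
          rw [← hg, hd0]
          exact Nat.fib_greatestFib_le c
        have hgd : d0 + 2 = g + 4 := by omega
        rw [hgd]
        omega
    omega
  · -- correctness
    intro w hw
    obtain ⟨H, W, hpad, hfold⟩ := FTMAux.eval_inv d0 w hw
    have hpadv : ValidFib (H ++ W.1) := by
      rw [← hpad]
      exact FTMAux.validFib_replicate_append d0 hw
    have hH : ValidFib H := (FTMAux.validFib_append hpadv).1
    have hWv : ValidFib W.1 := W.2.2
    have hWl : W.1.length = d0 := W.2.1
    have hval : fibVal w = FTMAux.fibValK d0 H + FTMAux.fibValK 0 W.1 := by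
      rw [FTMAux.fibVal_eq, ← FTMAux.fibValK_replicate 0 d0 w, hpad,
        FTMAux.fibValK_append, hWl, Nat.add_zero]
    have hvlt : FTMAux.fibValK 0 W.1 + c < Nat.fib (d0 + 3) := by
      have hb := FTMAux.fibValK_lt W.1 0 hWv
      rw [hWl] at hb
      rw [show d0 + 0 + 2 = d0 + 2 from by omega] at hb
      have hc := Nat.lt_fib_greatestFib_add_one c
      rw [← hd0] at hc
      have hf : Nat.fib (d0 + 3) = Nat.fib (d0 + 1) + Nat.fib (d0 + 2) :=
        Nat.fib_add_two
      omega
    have hmain := FTMAux.main_lemma H hH d0 (FTMAux.fibValK 0 W.1 + c) hvlt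
    show FTMAux.outF c d0 (w.foldl (FTMAux.stepF d0) (FTMAux.startF d0))
        = fibThueMorse (fibVal w + c)
    rw [hfold]
    unfold FTMAux.outF fibThueMorse
    have hnat : fibVal w + c
        = FTMAux.fibValK d0 H + (FTMAux.fibValK 0 W.1 + c) := by omega
    rw [hnat]
    have hz : (((Nat.zeckendorf (FTMAux.fibValK d0 (FTMAux.rep (FTMAux.cls H))
          + (FTMAux.fibValK 0 W.1 + c))).length + FTMAux.ones (FTMAux.rep (FTMAux.cls H))
          + ((FTMAux.ones H : ZMod 2)).val : ℕ) : ZMod 2)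
        = ((Nat.zeckendorf (FTMAux.fibValK d0 H
          + (FTMAux.fibValK 0 W.1 + c))).length : ZMod 2) := by
      push_cast
      have hv2 : (((FTMAux.ones H : ZMod 2)).val : ZMod 2) = (FTMAux.ones H : ZMod 2) :=
        ZMod.natCast_rightInverse _
      rw [hv2]
      have h2 : (2 : ZMod 2) = 0 := rfl
      unfold FTMAux.lk at hmain
      linear_combination - hmain + (FTMAux.ones H : ZMod 2) * h2
    have := (ZMod.natCast_eq_natCast_iff _ _ 2).1 hz
    exact this
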